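/- Let k, h ≥ 2 be integers and d > 0 a real number. Define f : ℝ^k × ℝ^h → ℝ by f(x,y) = (1/4)(u − v)v^d, where u = (h−1)|x|^2 and v = (k−1)|y|^2. Then at every point (x,y) with y ≠ 0: (i) |∇f|^2 = ((h−1)/4) · u · v^{2d} + ((k−1)/4) · v · ( d u v^{d−1} − (d+1)v^d )^2; and (ii) wherever in addition ∇f ≠ 0, writing g = ∇f/|∇f|, |∇f|^3 · div g = ((h−1)(k−1)/8) (u − v) v^{3d−2} [ d^3 (k−1) u^2 + d( h − 2 + d + 2d^2 − 2d(1+d)k ) u v + (d+1)^2 ( d(k−1) − 1 ) v^2 ]. -/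

import Mathlib

open MeasureTheory
open scoped RealInnerProductSpace ENNReal

noncomputable section

/-- Euclidean norm of the first (`ℝ^k`) component of `z = (x, y)`. -/
def nX (k h : ℕ) (z : EuclideanSpace ℝ (Fin (k + h))) : ℝ :=
  Real.sqrt (∑ i : Fin k, (z (Fin.castAdd h i)) ^ 2)

/-- Euclidean norm of the second (`ℝ^h`) component of `z = (x, y)`. -/
def nY (k h : ℕ) (z : EuclideanSpace ℝ (Fin (k + h))) : ℝ :=
  Real.sqrt (∑ j : Fin h, (z (Fin.natAdd k j)) ^ 2)

/-- The Lawson cone `M_{kh}`. -/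
def Mset (k h : ℕ) : Set (EuclideanSpace ℝ (Fin (k + h))) :=
  {z | nX k h z / Real.sqrt ((k : ℝ) - 1) = nY k h z / Real.sqrt ((h : ℝ) - 1)}

/-- The open region `K_{kh}` bounded by the Lawson cone. -/
def Kset (k h : ℕ) : Set (EuclideanSpace ℝ (Fin (k + h))) :=
  {z | nX k h z / Real.sqrt ((k : ℝ) - 1) < nY k h z / Real.sqrt ((h : ℝ) - 1)}

/-- The cylinder `H_R = B_R^k × B_R^h`. -/
def Hset (k h : ℕ) (R : ℝ) : Set (EuclideanSpace ℝ (Fin (k + h))) :=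
  {z | nX k h z < R ∧ nY k h z < R}

/-- The exceptional set `S` of pairs. -/
def S : Set (ℕ × ℕ) := {(3, 5), (2, 7), (2, 8), (2, 9), (2, 10), (2, 11)}

/-- Divergence of a vector field, as the trace of its derivative
(equivalently `∑ i, ∂ᵢ gᵢ`). -/
def divg {n : ℕ} (g : EuclideanSpace ℝ (Fin n) → EuclideanSpace ℝ (Fin n))
    (z : EuclideanSpace ℝ (Fin n)) : ℝ :=
  LinearMap.trace ℝ _ (fderiv ℝ g z).toLinearMap

/-- `u = (h-1)|x|^2`. -/
def uG (k h : ℕ) (z : EuclideanSpace ℝ (Fin (k + h))) : ℝ := ((h : ℝ) - 1) * nX k h z ^ 2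

/-- `v = (k-1)|y|^2`. -/
def vG (k h : ℕ) (z : EuclideanSpace ℝ (Fin (k + h))) : ℝ := ((k : ℝ) - 1) * nY k h z ^ 2

/-- `f(x,y) = (1/4)(u - v)v^d`. -/
def fV (k h : ℕ) (d : ℝ) (z : EuclideanSpace ℝ (Fin (k + h))) : ℝ :=
  (1 / 4) * (uG k h z - vG k h z) * vG k h z ^ d

namespace LawAux

abbrev E (n : ℕ) := EuclideanSpace ℝ (Fin n)

/-- trace of a CLM on EuclideanSpace as sum of diagonal entries -/
lemma trace_clm {n : ℕ} (T : E n →L[ℝ] E n) :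
    LinearMap.trace ℝ _ T.toLinearMap = ∑ i, T (EuclideanSpace.basisFun (Fin n) ℝ i) i := by
  rw [LinearMap.trace_eq_matrix_trace ℝ (EuclideanSpace.basisFun (Fin n) ℝ).toBasis,
    Matrix.trace]
  congr 1
  ext i
  rw [Matrix.diag, LinearMap.toMatrix_apply]
  simp [OrthonormalBasis.coe_toBasis_repr_apply, OrthonormalBasis.coe_toBasis,
    EuclideanSpace.basisFun_repr]

def Xl (k h : ℕ) : E (k+h) →L[ℝ] E (k+h) :=
  LinearMap.toContinuousLinearMap
  { toFun := fun w => WithLp.toLp 2 (fun i => if (i:ℕ) < k then w i else 0)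
    map_add' := by intro a b; ext i; by_cases hi : (i:ℕ) < k <;> simp [hi]
    map_smul' := by intro c a; ext i; by_cases hi : (i:ℕ) < k <;> simp [hi] }

def Yl (k h : ℕ) : E (k+h) →L[ℝ] E (k+h) :=
  LinearMap.toContinuousLinearMap
  { toFun := fun w => WithLp.toLp 2 (fun i => if (i:ℕ) < k then 0 else w i)
    map_add' := by intro a b; ext i; by_cases hi : (i:ℕ) < k <;> simp [hi]
    map_smul' := by intro c a; by_cases hi : True <;> (ext i; by_cases hi : (i:ℕ) < k <;> simp [hi]) }

@[simp] lemma Xl_cast (k h : ℕ) (w : E (k+h)) (i : Fin k) :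
    Xl k h w (Fin.castAdd h i) = w (Fin.castAdd h i) := by
  show (if ((Fin.castAdd h i : Fin (k+h)):ℕ) < k then w _ else 0) = _
  simp [i.isLt]
@[simp] lemma Xl_nat (k h : ℕ) (w : E (k+h)) (j : Fin h) :
    Xl k h w (Fin.natAdd k j) = 0 := by
  show (if ((Fin.natAdd k j : Fin (k+h)):ℕ) < k then w _ else 0) = _
  simp
@[simp] lemma Yl_cast (k h : ℕ) (w : E (k+h)) (i : Fin k) :
    Yl k h w (Fin.castAdd h i) = 0 := by
  show (if ((Fin.castAdd h i : Fin (k+h)):ℕ) < k then 0 else w _) = _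
  simp [i.isLt]
@[simp] lemma Yl_nat (k h : ℕ) (w : E (k+h)) (j : Fin h) :
    Yl k h w (Fin.natAdd k j) = w (Fin.natAdd k j) := by
  show (if ((Fin.natAdd k j : Fin (k+h)):ℕ) < k then 0 else w _) = _
  simp

def sF (k h : ℕ) (z : E (k+h)) : ℝ := ∑ i : Fin k, (z (Fin.castAdd h i)) ^ 2
def tF (k h : ℕ) (z : E (k+h)) : ℝ := ∑ j : Fin h, (z (Fin.natAdd k j)) ^ 2

lemma sF_nonneg (k h : ℕ) (z : E (k+h)) : 0 ≤ sF k h z :=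
  Finset.sum_nonneg fun _ _ => sq_nonneg _
lemma tF_nonneg (k h : ℕ) (z : E (k+h)) : 0 ≤ tF k h z :=
  Finset.sum_nonneg fun _ _ => sq_nonneg _

lemma nX_sq (k h : ℕ) (z : E (k+h)) : nX k h z ^ 2 = sF k h z :=
  Real.sq_sqrt (sF_nonneg k h z)
lemma nY_sq (k h : ℕ) (z : E (k+h)) : nY k h z ^ 2 = tF k h z :=
  Real.sq_sqrt (tF_nonneg k h z)

def uF (k h : ℕ) (z : E (k+h)) : ℝ := ((h:ℝ) - 1) * sF k h z
def vF (k h : ℕ) (z : E (k+h)) : ℝ := ((k:ℝ) - 1) * tF k h z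

lemma uG_eq (k h : ℕ) (z : E (k+h)) : uG k h z = uF k h z := by
  rw [uG, nX_sq]; rfl
lemma vG_eq (k h : ℕ) (z : E (k+h)) : vG k h z = vF k h z := by
  rw [vG, nY_sq]; rfl

def dS (k h : ℕ) (z : E (k+h)) : E (k+h) →L[ℝ] ℝ :=
  ∑ i : Fin k, (2 * z (Fin.castAdd h i)) • EuclideanSpace.proj (Fin.castAdd h i)
def dT (k h : ℕ) (z : E (k+h)) : E (k+h) →L[ℝ] ℝ :=
  ∑ j : Fin h, (2 * z (Fin.natAdd k j)) • EuclideanSpace.proj (Fin.natAdd k j)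

lemma dS_apply (k h : ℕ) (z w : E (k+h)) :
    dS k h z w = ∑ i : Fin k, 2 * z (Fin.castAdd h i) * w (Fin.castAdd h i) := by
  simp [dS, ContinuousLinearMap.sum_apply]

lemma dT_apply (k h : ℕ) (z w : E (k+h)) :
    dT k h z w = ∑ j : Fin h, 2 * z (Fin.natAdd k j) * w (Fin.natAdd k j) := by
  simp [dT, ContinuousLinearMap.sum_apply]

lemma hasFDerivAt_sF (k h : ℕ) (z : E (k+h)) :
    HasFDerivAt (sF k h) (dS k h z) z := by
  have : ∀ i ∈ Finset.univ, HasFDerivAt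
      (fun w : E (k+h) => (w (Fin.castAdd h i)) ^ 2)
      ((2 * z (Fin.castAdd h i)) • (EuclideanSpace.proj (Fin.castAdd h i) : E (k+h) →L[ℝ] ℝ)) z := by
    intro i _
    have := (hasDerivAt_pow 2 (z (Fin.castAdd h i))).comp_hasFDerivAt z
      ((EuclideanSpace.proj (Fin.castAdd h i) : E (k+h) →L[ℝ] ℝ).hasFDerivAt (x := z))
    simpa [pow_one, Function.comp_def] using this
  exact HasFDerivAt.fun_sum this

lemma hasFDerivAt_tF (k h : ℕ) (z : E (k+h)) :
    HasFDerivAt (tF k h) (dT k h z) z := by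
  have : ∀ j ∈ Finset.univ, HasFDerivAt
      (fun w : E (k+h) => (w (Fin.natAdd k j)) ^ 2)
      ((2 * z (Fin.natAdd k j)) • (EuclideanSpace.proj (Fin.natAdd k j) : E (k+h) →L[ℝ] ℝ)) z := by
    intro j _
    have := (hasDerivAt_pow 2 (z (Fin.natAdd k j))).comp_hasFDerivAt z
      ((EuclideanSpace.proj (Fin.natAdd k j) : E (k+h) →L[ℝ] ℝ).hasFDerivAt (x := z))
    simpa [pow_one, Function.comp_def] using this
  exact HasFDerivAt.fun_sum this


def aF (k h : ℕ) (d : ℝ) (z : E (k+h)) : ℝ := (((h:ℝ) - 1) / 2) * vF k h z ^ d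
def bF (k h : ℕ) (d : ℝ) (z : E (k+h)) : ℝ :=
  (((k:ℝ) - 1) / 2) * (d * uF k h z * vF k h z ^ (d - 1) - (d + 1) * vF k h z ^ d)
def GF (k h : ℕ) (d : ℝ) (z : E (k+h)) : E (k+h) :=
  aF k h d z • Xl k h z + bF k h d z • Yl k h z
def WF (k h : ℕ) (d : ℝ) (z : E (k+h)) : ℝ :=
  aF k h d z ^ 2 * sF k h z + bF k h d z ^ 2 * tF k h z

lemma GF_cast (k h : ℕ) (d : ℝ) (z : E (k+h)) (i : Fin k) :
    GF k h d z (Fin.castAdd h i) = aF k h d z * z (Fin.castAdd h i) := by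
  have : GF k h d z (Fin.castAdd h i) = aF k h d z * Xl k h z (Fin.castAdd h i)
      + bF k h d z * Yl k h z (Fin.castAdd h i) := rfl
  rw [this, Xl_cast, Yl_cast]; ring

lemma GF_nat (k h : ℕ) (d : ℝ) (z : E (k+h)) (j : Fin h) :
    GF k h d z (Fin.natAdd k j) = bF k h d z * z (Fin.natAdd k j) := by
  have : GF k h d z (Fin.natAdd k j) = aF k h d z * Xl k h z (Fin.natAdd k j)
      + bF k h d z * Yl k h z (Fin.natAdd k j) := rfl
  rw [this, Xl_nat, Yl_nat]; ring

lemma norm_GF_sq (k h : ℕ) (d : ℝ) (z : E (k+h)) :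
    ‖GF k h d z‖ ^ 2 = WF k h d z := by
  rw [EuclideanSpace.norm_eq, Real.sq_sqrt (Finset.sum_nonneg fun _ _ => sq_nonneg _)]
  simp_rw [Real.norm_eq_abs, sq_abs]
  rw [Fin.sum_univ_add]
  have h1 : ∀ i : Fin k, (GF k h d z (Fin.castAdd h i)) ^ 2
      = aF k h d z ^ 2 * (z (Fin.castAdd h i)) ^ 2 := by
    intro i; rw [GF_cast]; ring
  have h2 : ∀ j : Fin h, (GF k h d z (Fin.natAdd k j)) ^ 2
      = bF k h d z ^ 2 * (z (Fin.natAdd k j)) ^ 2 := by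
    intro j; rw [GF_nat]; ring
  simp_rw [h1, h2, ← Finset.mul_sum]
  rfl

lemma hasGradientAt_fV (k h : ℕ) (d : ℝ) (z : E (k+h)) (hv : 0 < vF k h z) :
    HasGradientAt (fV k h d) (GF k h d z) z := by
  have hs := hasFDerivAt_sF k h z
  have ht := hasFDerivAt_tF k h z
  have hu : HasFDerivAt (uF k h) (((h:ℝ) - 1) • dS k h z) z := hs.const_mul _
  have hv' : HasFDerivAt (vF k h) (((k:ℝ) - 1) • dT k h z) z := ht.const_mul _
  have hvd : HasFDerivAt (fun w => vF k h w ^ d)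
      ((d * vF k h z ^ (d - 1)) • (((k:ℝ) - 1) • dT k h z)) z :=
    hv'.rpow_const (Or.inl hv.ne')
  have h1 : HasFDerivAt (fun w => (1/4 : ℝ) * (uF k h w - vF k h w))
      ((1/4 : ℝ) • (((h:ℝ) - 1) • dS k h z - ((k:ℝ) - 1) • dT k h z)) z :=
    (hu.sub hv').const_mul _
  have h2 := h1.mul hvd
  have hfV : fV k h d = fun w => ((1/4 : ℝ) * (uF k h w - vF k h w)) * vF k h w ^ d := by
    funext w; rw [fV, uG_eq, vG_eq]
  rw [hasGradientAt_iff_hasFDerivAt]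
  rw [hfV]
  refine h2.congr_fderiv (Eq.symm ?_)
  apply ContinuousLinearMap.ext
  intro w
  rw [InnerProductSpace.toDual_apply_apply]
  rw [PiLp.inner_apply]
  simp only [RCLike.inner_apply, starRingEnd_apply, star_trivial]
  rw [Fin.sum_univ_add]
  simp only [GF_cast, GF_nat]
  have hrv : vF k h z ^ d = vF k h z ^ (d - 1) * vF k h z := by
    rw [← Real.rpow_add_one hv.ne' (d - 1)]; norm_num
  simp only [ContinuousLinearMap.add_apply, ContinuousLinearMap.smul_apply,
    ContinuousLinearMap.sub_apply, smul_eq_mul, dS_apply, dT_apply,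
    Finset.mul_sum]
  have hA : ∑ x : Fin k, aF k h d z * z (Fin.castAdd h x) * w (Fin.castAdd h x)
      = vF k h z ^ d * (1/4) *
        ∑ i : Fin k, ((h:ℝ) - 1) * (2 * z (Fin.castAdd h i) * w (Fin.castAdd h i)) := by
    rw [Finset.mul_sum]
    apply Finset.sum_congr rfl
    intro i _
    rw [aF]; ring
  have hB : ∑ x : Fin h, bF k h d z * z (Fin.natAdd k x) * w (Fin.natAdd k x)
      = (∑ i : Fin h, 1 / 4 * (uF k h z - vF k h z) *
          (d * vF k h z ^ (d - 1) * (((k:ℝ) - 1) * (2 * z (Fin.natAdd k i) * w (Fin.natAdd k i)))))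
        - vF k h z ^ d * (1/4) *
          ∑ i : Fin h, ((k:ℝ) - 1) * (2 * z (Fin.natAdd k i) * w (Fin.natAdd k i)) := by
    rw [Finset.mul_sum, ← Finset.sum_sub_distrib]
    apply Finset.sum_congr rfl
    intro j _
    rw [bF, hrv]; ring
  simp_rw [mul_comm (w _) (_ * _)]
  rw [hA, hB]; ring


lemma dS_basis_cast (k h : ℕ) (z : E (k+h)) (i : Fin k) :
    dS k h z (EuclideanSpace.single (Fin.castAdd h i) 1) = 2 * z (Fin.castAdd h i) := by
  rw [dS_apply, Finset.sum_eq_single i]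
  · simp [EuclideanSpace.single_apply]
  · intro b _ hb
    rw [EuclideanSpace.single_apply]
    simp only [Fin.castAdd_inj]
    rw [if_neg hb]; ring
  · simp

lemma dS_basis_nat (k h : ℕ) (z : E (k+h)) (j : Fin h) :
    dS k h z (EuclideanSpace.single (Fin.natAdd k j) 1) = 0 := by
  rw [dS_apply]
  apply Finset.sum_eq_zero
  intro b _
  rw [EuclideanSpace.single_apply, if_neg, mul_zero]
  intro e
  have := congrArg Fin.val e
  simp at this
  omega

lemma dT_basis_cast (k h : ℕ) (z : E (k+h)) (i : Fin k) :
    dT k h z (EuclideanSpace.single (Fin.castAdd h i) 1) = 0 := by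
  rw [dT_apply]
  apply Finset.sum_eq_zero
  intro b _
  rw [EuclideanSpace.single_apply, if_neg, mul_zero]
  intro e
  have := congrArg Fin.val e
  simp at this
  have := i.isLt
  omega

lemma dT_basis_nat (k h : ℕ) (z : E (k+h)) (j : Fin h) :
    dT k h z (EuclideanSpace.single (Fin.natAdd k j) 1) = 2 * z (Fin.natAdd k j) := by
  rw [dT_apply, Finset.sum_eq_single j]
  · simp [EuclideanSpace.single_apply]
  · intro b _ hb
    rw [EuclideanSpace.single_apply, if_neg, mul_zero]
    intro e
    have := congrArg Fin.val e
    simp at this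
    exact hb (Fin.ext this)
  · simp

lemma single_cast_apply_cast (k h : ℕ) (i i' : Fin k) :
    (EuclideanSpace.single (Fin.castAdd h i) (1:ℝ)) (Fin.castAdd h i') = if i' = i then 1 else 0 := by
  rw [EuclideanSpace.single_apply]
  simp [Fin.castAdd_inj]

lemma single_nat_apply_nat (k h : ℕ) (j j' : Fin h) :
    (EuclideanSpace.single (Fin.natAdd k j) (1:ℝ)) (Fin.natAdd k j') = if j' = j then 1 else 0 := by
  rw [EuclideanSpace.single_apply]
  by_cases e : j' = j
  · simp [e]
  · rw [if_neg, if_neg e]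
    intro e'
    have := congrArg Fin.val e'
    simp at this
    exact e (Fin.ext this)


def qaF (k h : ℕ) (d : ℝ) (z : E (k+h)) : ℝ :=
  (((h:ℝ) - 1) / 2) * (d * vF k h z ^ (d - 1)) * ((k:ℝ) - 1)
def pbF (k h : ℕ) (d : ℝ) (z : E (k+h)) : ℝ :=
  (((k:ℝ) - 1) / 2) * (d * ((h:ℝ) - 1) * vF k h z ^ (d - 1))
def qbF (k h : ℕ) (d : ℝ) (z : E (k+h)) : ℝ :=
  (((k:ℝ) - 1) / 2) * ((d * uF k h z) * ((d - 1) * vF k h z ^ (d - 1 - 1)) * ((k:ℝ) - 1)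
    - (d + 1) * (d * vF k h z ^ (d - 1)) * ((k:ℝ) - 1))
def pWF (k h : ℕ) (d : ℝ) (z : E (k+h)) : ℝ :=
  aF k h d z ^ 2 + 2 * bF k h d z * pbF k h d z * tF k h z
def qWF (k h : ℕ) (d : ℝ) (z : E (k+h)) : ℝ :=
  2 * aF k h d z * qaF k h d z * sF k h z + 2 * bF k h d z * qbF k h d z * tF k h z
    + bF k h d z ^ 2
def pNF (k h : ℕ) (d : ℝ) (z : E (k+h)) : ℝ :=
  -(WF k h d z)⁻¹ * (2 * Real.sqrt (WF k h d z))⁻¹ * pWF k h d z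
def qNF (k h : ℕ) (d : ℝ) (z : E (k+h)) : ℝ :=
  -(WF k h d z)⁻¹ * (2 * Real.sqrt (WF k h d z))⁻¹ * qWF k h d z

section derivs
variable (k h : ℕ) (d : ℝ) (z : E (k+h))

lemma hasFDerivAt_aF (hv : 0 < vF k h z) :
    HasFDerivAt (aF k h d) ((0:ℝ) • dS k h z + qaF k h d z • dT k h z) z := by
  have hv' : HasFDerivAt (vF k h) (((k:ℝ) - 1) • dT k h z) z :=
    (hasFDerivAt_tF k h z).const_mul _
  have h1 := (hv'.rpow_const (p := d) (Or.inl hv.ne')).const_mul (((h:ℝ) - 1) / 2)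
  refine h1.congr_fderiv (Eq.symm ?_)
  apply ContinuousLinearMap.ext
  intro w
  simp only [ContinuousLinearMap.add_apply, ContinuousLinearMap.smul_apply, smul_eq_mul, qaF]
  ring

lemma hasFDerivAt_bF (hv : 0 < vF k h z) :
    HasFDerivAt (bF k h d) (pbF k h d z • dS k h z + qbF k h d z • dT k h z) z := by
  have hu : HasFDerivAt (uF k h) (((h:ℝ) - 1) • dS k h z) z :=
    (hasFDerivAt_sF k h z).const_mul _
  have hv' : HasFDerivAt (vF k h) (((k:ℝ) - 1) • dT k h z) z :=
    (hasFDerivAt_tF k h z).const_mul _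
  have hr := hv'.rpow_const (p := d - 1) (Or.inl hv.ne')
  have hT1 := (hu.const_mul d).mul hr
  have hT2 := (hv'.rpow_const (p := d) (Or.inl hv.ne')).const_mul (d + 1)
  have h1 := (hT1.sub hT2).const_mul (((k:ℝ) - 1) / 2)
  refine h1.congr_fderiv (Eq.symm ?_)
  apply ContinuousLinearMap.ext
  intro w
  simp only [ContinuousLinearMap.add_apply, ContinuousLinearMap.smul_apply,
    ContinuousLinearMap.sub_apply, smul_eq_mul, pbF, qbF]
  ring

lemma hasFDerivAt_WF (hv : 0 < vF k h z) :
    HasFDerivAt (WF k h d) (pWF k h d z • dS k h z + qWF k h d z • dT k h z) z := by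
  have ha := hasFDerivAt_aF k h d z hv
  have hb := hasFDerivAt_bF k h d z hv
  have ha2 := (hasDerivAt_pow 2 (aF k h d z)).comp_hasFDerivAt z ha
  have hb2 := (hasDerivAt_pow 2 (bF k h d z)).comp_hasFDerivAt z hb
  have h1 := (ha2.mul (hasFDerivAt_sF k h z)).add (hb2.mul (hasFDerivAt_tF k h z))
  refine h1.congr_fderiv (Eq.symm ?_)
  apply ContinuousLinearMap.ext
  intro w
  simp only [ContinuousLinearMap.add_apply, ContinuousLinearMap.smul_apply,
    smul_eq_mul, pWF, qWF, pow_one, Function.comp]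
  ring

lemma hasFDerivAt_sqrtWF_inv (hv : 0 < vF k h z) (hW : 0 < WF k h d z) :
    HasFDerivAt (fun w => (Real.sqrt (WF k h d w))⁻¹)
      (pNF k h d z • dS k h z + qNF k h d z • dT k h z) z := by
  have hsq : 0 < Real.sqrt (WF k h d z) := Real.sqrt_pos.mpr hW
  have hN := (hasFDerivAt_WF k h d z hv).sqrt hW.ne'
  have h1 := (hasDerivAt_inv hsq.ne').comp_hasFDerivAt z hN
  refine h1.congr_fderiv (Eq.symm ?_)
  apply ContinuousLinearMap.ext
  intro w
  simp only [ContinuousLinearMap.add_apply, ContinuousLinearMap.smul_apply,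
    smul_eq_mul, pNF, qNF]
  rw [Real.sq_sqrt hW.le]
  ring

lemma hasFDerivAt_GF (hv : 0 < vF k h z) :
    HasFDerivAt (GF k h d)
      ((aF k h d z • Xl k h +
          ((0:ℝ) • dS k h z + qaF k h d z • dT k h z).smulRight (Xl k h z)) +
        (bF k h d z • Yl k h +
          (pbF k h d z • dS k h z + qbF k h d z • dT k h z).smulRight (Yl k h z))) z := by
  exact ((hasFDerivAt_aF k h d z hv).smul (Xl k h).hasFDerivAt).add
    ((hasFDerivAt_bF k h d z hv).smul (Yl k h).hasFDerivAt)


def DGclm (k h : ℕ) (d : ℝ) (z : E (k+h)) : E (k+h) →L[ℝ] E (k+h) :=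
  (aF k h d z • Xl k h +
      ((0:ℝ) • dS k h z + qaF k h d z • dT k h z).smulRight (Xl k h z)) +
    (bF k h d z • Yl k h +
      (pbF k h d z • dS k h z + qbF k h d z • dT k h z).smulRight (Yl k h z))

def Dfull (k h : ℕ) (d : ℝ) (z : E (k+h)) : E (k+h) →L[ℝ] E (k+h) :=
  (Real.sqrt (WF k h d z))⁻¹ • DGclm k h d z +
    (pNF k h d z • dS k h z + qNF k h d z • dT k h z).smulRight (GF k h d z)

lemma hasFDerivAt_gfield (hv : 0 < vF k h z) (hW : 0 < WF k h d z) :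
    HasFDerivAt (fun w => (Real.sqrt (WF k h d w))⁻¹ • GF k h d w)
      (Dfull k h d z) z :=
  (hasFDerivAt_sqrtWF_inv k h d z hv hW).smul (hasFDerivAt_GF k h d z hv)

lemma Dfull_cast (i : Fin k) :
    Dfull k h d z (EuclideanSpace.single (Fin.castAdd h i) 1) (Fin.castAdd h i)
      = (Real.sqrt (WF k h d z))⁻¹ * aF k h d z
        + 2 * pNF k h d z * aF k h d z * (z (Fin.castAdd h i)) ^ 2 := by
  simp only [Dfull, DGclm, ContinuousLinearMap.add_apply, ContinuousLinearMap.smul_apply,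
    ContinuousLinearMap.smulRight_apply, smul_eq_mul,
    dS_basis_cast, dT_basis_cast, mul_zero, zero_mul, add_zero, zero_add]
  simp only [PiLp.add_apply, PiLp.smul_apply, smul_eq_mul, Xl_cast, Yl_cast, GF_cast,
    single_cast_apply_cast, if_pos rfl, if_true, mul_zero, add_zero, mul_one]
  ring

lemma Dfull_nat (j : Fin h) :
    Dfull k h d z (EuclideanSpace.single (Fin.natAdd k j) 1) (Fin.natAdd k j)
      = (Real.sqrt (WF k h d z))⁻¹ * (bF k h d z
          + 2 * qbF k h d z * (z (Fin.natAdd k j)) ^ 2)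
        + 2 * qNF k h d z * bF k h d z * (z (Fin.natAdd k j)) ^ 2 := by
  simp only [Dfull, DGclm, ContinuousLinearMap.add_apply, ContinuousLinearMap.smul_apply,
    ContinuousLinearMap.smulRight_apply, smul_eq_mul,
    dS_basis_nat, dT_basis_nat, mul_zero, zero_mul, add_zero, zero_add]
  simp only [PiLp.add_apply, PiLp.smul_apply, smul_eq_mul, Xl_nat, Yl_nat, GF_nat,
    single_nat_apply_nat, if_pos rfl, if_true, mul_zero, zero_add, mul_one]
  ring

lemma trace_Dfull :
    LinearMap.trace ℝ _ (Dfull k h d z).toLinearMap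
      = (Real.sqrt (WF k h d z))⁻¹ *
          ((k:ℝ) * aF k h d z + (h:ℝ) * bF k h d z + 2 * qbF k h d z * tF k h z)
        + 2 * pNF k h d z * aF k h d z * sF k h z
        + 2 * qNF k h d z * bF k h d z * tF k h z := by
  rw [trace_clm]
  simp_rw [EuclideanSpace.basisFun_apply]
  rw [Fin.sum_univ_add]
  simp_rw [Dfull_cast, Dfull_nat]
  have hA : ∑ i : Fin k, ((Real.sqrt (WF k h d z))⁻¹ * aF k h d z
        + 2 * pNF k h d z * aF k h d z * (z (Fin.castAdd h i)) ^ 2)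
      = (k:ℝ) * ((Real.sqrt (WF k h d z))⁻¹ * aF k h d z)
        + 2 * pNF k h d z * aF k h d z * sF k h z := by
    rw [Finset.sum_add_distrib, Finset.sum_const, ← Finset.mul_sum]
    simp only [Finset.card_univ, Fintype.card_fin, nsmul_eq_mul]
    rfl
  have hB : ∑ j : Fin h, ((Real.sqrt (WF k h d z))⁻¹ * (bF k h d z
        + 2 * qbF k h d z * (z (Fin.natAdd k j)) ^ 2)
        + 2 * qNF k h d z * bF k h d z * (z (Fin.natAdd k j)) ^ 2)
      = (h:ℝ) * ((Real.sqrt (WF k h d z))⁻¹ * bF k h d z)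
        + (Real.sqrt (WF k h d z))⁻¹ * (2 * qbF k h d z * tF k h z)
        + 2 * qNF k h d z * bF k h d z * tF k h z := by
    simp_rw [mul_add]
    rw [Finset.sum_add_distrib, Finset.sum_add_distrib, Finset.sum_const,
      ← Finset.mul_sum, ← Finset.mul_sum, ← Finset.mul_sum]
    simp only [Finset.card_univ, Fintype.card_fin, nsmul_eq_mul]
    rfl
  rw [hA, hB]
  ring

end derivs


lemma part_i_calc (k h : ℕ) (d : ℝ) (z : E (k+h)) (hv : 0 < vF k h z) :
    WF k h d z = ((h:ℝ) - 1) / 4 * uF k h z * vF k h z ^ (2 * d)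
      + ((k:ℝ) - 1) / 4 * vF k h z *
        (d * uF k h z * vF k h z ^ (d - 1) - (d + 1) * vF k h z ^ d) ^ 2 := by
  have hrv : vF k h z ^ d = vF k h z ^ (d - 1) * vF k h z := by
    rw [← Real.rpow_add_one hv.ne' (d - 1)]; norm_num
  have h2d : vF k h z ^ (2 * d)
      = vF k h z ^ (d - 1) * vF k h z * (vF k h z ^ (d - 1) * vF k h z) := by
    rw [show 2 * d = d + d by ring, Real.rpow_add hv, hrv]
  simp only [WF, aF, bF, uF, hrv, h2d]
  simp only [vF, uF]
  ring

set_option maxRecDepth 20000 in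
lemma part_ii_calc (k h : ℕ) (d : ℝ) (z : E (k+h)) (hv : 0 < vF k h z)
    (hW : 0 < WF k h d z) :
    Real.sqrt (WF k h d z) ^ 3 *
      ((Real.sqrt (WF k h d z))⁻¹ *
          ((k:ℝ) * aF k h d z + (h:ℝ) * bF k h d z + 2 * qbF k h d z * tF k h z)
        + 2 * pNF k h d z * aF k h d z * sF k h z
        + 2 * qNF k h d z * bF k h d z * tF k h z)
    = ((h:ℝ) - 1) * ((k:ℝ) - 1) / 8 * (uF k h z - vF k h z) *
        vF k h z ^ (3 * d - 2) *
        (d ^ 3 * ((k:ℝ) - 1) * uF k h z ^ 2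
          + d * ((h:ℝ) - 2 + d + 2 * d ^ 2 - 2 * d * (1 + d) * (k:ℝ))
              * uF k h z * vF k h z
          + (d + 1) ^ 2 * (d * ((k:ℝ) - 1) - 1) * vF k h z ^ 2) := by
  have hn : 0 < Real.sqrt (WF k h d z) := Real.sqrt_pos.mpr hW
  have key : Real.sqrt (WF k h d z) ^ 3 *
      ((Real.sqrt (WF k h d z))⁻¹ *
          ((k:ℝ) * aF k h d z + (h:ℝ) * bF k h d z + 2 * qbF k h d z * tF k h z)
        + 2 * pNF k h d z * aF k h d z * sF k h z
        + 2 * qNF k h d z * bF k h d z * tF k h z)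
      = WF k h d z *
          ((k:ℝ) * aF k h d z + (h:ℝ) * bF k h d z + 2 * qbF k h d z * tF k h z)
        - pWF k h d z * aF k h d z * sF k h z
        - qWF k h d z * bF k h d z * tF k h z := by
    obtain ⟨n, hn0, hnW⟩ : ∃ n : ℝ, 0 < n ∧ n ^ 2 = WF k h d z :=
      ⟨Real.sqrt (WF k h d z), hn, Real.sq_sqrt hW.le⟩
    rw [pNF, qNF, ← hnW, Real.sqrt_sq hn0.le]
    field_simp
    ring
  rw [key]
  have hrv : vF k h z ^ d = vF k h z ^ (d - 1) * vF k h z := by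
    rw [← Real.rpow_add_one hv.ne' (d - 1)]; norm_num
  have hd2 : vF k h z ^ (d - 1 - 1) = vF k h z ^ (d - 1) / vF k h z :=
    Real.rpow_sub_one hv.ne' (d - 1)
  have h3d : vF k h z ^ (3 * d - 2)
      = vF k h z ^ (d - 1) * vF k h z ^ (d - 1) * vF k h z ^ (d - 1) * vF k h z := by
    rw [show 3 * d - 2 = (d - 1) + ((d - 1) + ((d - 1) + 1)) by ring,
      Real.rpow_add hv, Real.rpow_add hv, Real.rpow_add_one hv.ne']
    ring
  simp only [WF, pWF, qWF, aF, bF, qbF, pbF, qaF, hrv, hd2, h3d, uF]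
  generalize vF k h z ^ (d - 1) = p
  simp only [vF, uF]
  have htne : ((k:ℝ) - 1) * tF k h z ≠ 0 := by
    have := hv; simp only [vF] at this; exact this.ne'
  have hk0 : ((k:ℝ) - 1) ≠ 0 := left_ne_zero_of_mul htne
  have ht0 : tF k h z ≠ 0 := right_ne_zero_of_mul htne
  field_simp
  ring


lemma divg_field (k h : ℕ) (d : ℝ) (z : E (k+h)) (hk1 : 0 < (k:ℝ) - 1)
    (ht : 0 < tF k h z) (hW : 0 < WF k h d z) :
    divg (fun w => ‖gradient (fV k h d) w‖⁻¹ • gradient (fV k h d) w) z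
      = (Real.sqrt (WF k h d z))⁻¹ *
          ((k:ℝ) * aF k h d z + (h:ℝ) * bF k h d z + 2 * qbF k h d z * tF k h z)
        + 2 * pNF k h d z * aF k h d z * sF k h z
        + 2 * qNF k h d z * bF k h d z * tF k h z := by
  have hv : 0 < vF k h z := mul_pos hk1 ht
  have hcont : Continuous (tF k h) := by
    apply continuous_finset_sum
    intro j _
    exact ((EuclideanSpace.proj (Fin.natAdd k j) : E (k+h) →L[ℝ] ℝ).continuous).pow 2
  have hmem : {w : E (k+h) | 0 < tF k h w} ∈ nhds z :=
    (isOpen_lt continuous_const hcont).mem_nhds ht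
  have heq : (fun w => ‖gradient (fV k h d) w‖⁻¹ • gradient (fV k h d) w)
      =ᶠ[nhds z] (fun w => (Real.sqrt (WF k h d w))⁻¹ • GF k h d w) := by
    filter_upwards [hmem] with w hw
    have hvw : 0 < vF k h w := mul_pos hk1 hw
    have hgw : gradient (fV k h d) w = GF k h d w := (hasGradientAt_fV k h d w hvw).gradient
    have hnw : ‖GF k h d w‖ = Real.sqrt (WF k h d w) := by
      rw [← norm_GF_sq k h d w, Real.sqrt_sq (norm_nonneg _)]
    rw [hgw, hnw]
  rw [divg, heq.fderiv_eq, (hasFDerivAt_gfield k h d z hv hW).fderiv, trace_Dfull]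

end LawAux

/-- The formulas for `|∇f|^2` and `|∇f|^3 · div(∇f/|∇f|)` when `f = (1/4)(u-v)v^d`
(Section 3.2 of the paper). -/
theorem stmt6 (k h : ℕ) (hk : 2 ≤ k) (hh : 2 ≤ h) (d : ℝ) (hd : 0 < d)
    (z : EuclideanSpace ℝ (Fin (k + h))) (hy : nY k h z ≠ 0) :
    ‖gradient (fV k h d) z‖ ^ 2 =
      ((h : ℝ) - 1) / 4 * uG k h z * vG k h z ^ (2 * d)
        + ((k : ℝ) - 1) / 4 * vG k h z *
            (d * uG k h z * vG k h z ^ (d - 1) - (d + 1) * vG k h z ^ d) ^ 2 ∧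
    (gradient (fV k h d) z ≠ 0 →
      ‖gradient (fV k h d) z‖ ^ 3 *
          divg (fun w => ‖gradient (fV k h d) w‖⁻¹ • gradient (fV k h d) w) z =
        ((h : ℝ) - 1) * ((k : ℝ) - 1) / 8 * (uG k h z - vG k h z) *
          vG k h z ^ (3 * d - 2) *
          (d ^ 3 * ((k : ℝ) - 1) * uG k h z ^ 2
            + d * ((h : ℝ) - 2 + d + 2 * d ^ 2 - 2 * d * (1 + d) * (k : ℝ))
                * uG k h z * vG k h z
            + (d + 1) ^ 2 * (d * ((k : ℝ) - 1) - 1) * vG k h z ^ 2)) := by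
  have ht0 : 0 < LawAux.tF k h z := by
    rcases lt_or_eq_of_le (LawAux.tF_nonneg k h z) with h' | h'
    · exact h'
    · exact absurd (show nY k h z = 0 by
        rw [show nY k h z = Real.sqrt (LawAux.tF k h z) from rfl, ← h', Real.sqrt_zero]) hy
  have hk1 : 0 < (k:ℝ) - 1 := by
    have : (2:ℝ) ≤ (k:ℝ) := by exact_mod_cast hk
    linarith
  have hv : 0 < LawAux.vF k h z := mul_pos hk1 ht0
  have hgrad : gradient (fV k h d) z = LawAux.GF k h d z :=
    (LawAux.hasGradientAt_fV k h d z hv).gradient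
  constructor
  · rw [hgrad, LawAux.norm_GF_sq, LawAux.uG_eq, LawAux.vG_eq]
    exact LawAux.part_i_calc k h d z hv
  · intro h0
    rw [hgrad] at h0
    have hW : 0 < LawAux.WF k h d z := by
      rw [← LawAux.norm_GF_sq]
      exact pow_pos (norm_pos_iff.mpr h0) 2
    have hnorm : ‖LawAux.GF k h d z‖ = Real.sqrt (LawAux.WF k h d z) := by
      rw [← LawAux.norm_GF_sq k h d z, Real.sqrt_sq (norm_nonneg _)]
    rw [hgrad, hnorm, LawAux.divg_field k h d z hk1 ht0 hW,
      LawAux.uG_eq, LawAux.vG_eq]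
    exact LawAux.part_ii_calc k h d z hv hW
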